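/- Define β_k = k/(k+3) and a_t = 3/(t+3) for nonnegative integers k, t. For integers k ≥ 3 and 1 ≤ t ≤ k-2, define σ_2(k,t) = ∑_{j=0}^{t-1} a_{k-t-1+j} · (t-j) · ∏_{i=0}^{j-1} β_{k-t-1+i} (with the empty product equal to 1). Then σ_2(k,t) ≤ t+1. -/

import Mathlib

noncomputable def beta (n : ℕ) : ℝ := n / (n + 3)

noncomputable def aseq (n : ℕ) : ℝ := 3 / (n + 3)

noncomputable def sigma2 (k t : ℕ) : ℝ :=
  ∑ j ∈ Finset.range t,
    aseq (k - t - 1 + j) * ((t : ℝ) - j) * ∏ i ∈ Finset.range j, beta (k - t - 1 + i)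

lemma beta_nonneg (n : ℕ) : 0 ≤ beta n := by
  unfold beta; positivity

lemma beta_le_one (n : ℕ) : beta n ≤ 1 := by
  unfold beta
  rw [div_le_one (by positivity)]
  linarith

lemma aseq_eq (n : ℕ) : aseq n = 1 - beta n := by
  unfold aseq beta
  field_simp
  ring

theorem stmt_4 (k t : ℕ) (hk : 3 ≤ k) (ht1 : 1 ≤ t) (ht2 : t ≤ k - 2) :
    sigma2 k t ≤ (t : ℝ) + 1 := by
  set m := k - t - 1 with hm
  set P : ℕ → ℝ := fun j => ∏ i ∈ Finset.range j, beta (m + i) with hP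
  have hPnn : ∀ j, 0 ≤ P j := fun j =>
    Finset.prod_nonneg fun i _ => beta_nonneg _
  have hPsucc : ∀ j, P (j + 1) = P j * beta (m + j) := fun j => by
    simp [hP, Finset.prod_range_succ]
  have key : sigma2 k t = ∑ j ∈ Finset.range t, ((t : ℝ) - j) * (P j - P (j + 1)) := by
    unfold sigma2
    refine Finset.sum_congr rfl fun j hj => ?_
    rw [hPsucc, aseq_eq]
    ring
  rw [key]
  have h1 : ∑ j ∈ Finset.range t, ((t : ℝ) - j) * (P j - P (j + 1)) ≤
      ∑ j ∈ Finset.range t, (t : ℝ) * (P j - P (j + 1)) := by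
    refine Finset.sum_le_sum fun j hj => ?_
    have hdiff : 0 ≤ P j - P (j + 1) := by
      rw [hPsucc]
      nlinarith [hPnn j, beta_le_one (m + j), beta_nonneg (m + j)]
    have : (t : ℝ) - j ≤ t := by
      have : (0 : ℝ) ≤ j := Nat.cast_nonneg j
      linarith
    exact mul_le_mul_of_nonneg_right this hdiff
  have h2 : ∑ j ∈ Finset.range t, (t : ℝ) * (P j - P (j + 1)) = (t : ℝ) * (P 0 - P t) := by
    rw [← Finset.mul_sum, Finset.sum_range_sub']
  have hP0 : P 0 = 1 := by simp [hP]
  calc _ ≤ (t : ℝ) * (P 0 - P t) := h1.trans h2.le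
    _ ≤ (t : ℝ) * 1 := by
        have := hPnn t
        nlinarith [Nat.cast_nonneg (α := ℝ) t, hP0]
    _ ≤ (t : ℝ) + 1 := by linarith
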